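/- arXiv:2209.04328 — 4 statements merged into one kernel-verified Lean document; each statement's English description precedes it below -/
import Mathlib

section
/- Let n ≥ 1 and let a, b be two distinct complex numbers. If f : ℂⁿ → ℂ is an entire (holomorphic on all of ℂⁿ) function such that for every z ∈ ℂⁿ the product ∏_{i=1}^n (∂f/∂z_i(z) − a)·(∂f/∂z_i(z) − b)·(∂f/∂z_i(z) − f(z)) is nonzero, then f is constant. -/
open Filter Topology Metric

section PicardAux
open Metric Set Complex


lemma entire_deriv_differentiable (g : ℂ → ℂ) (hg : Differentiable ℂ g) :
    Differentiable ℂ (deriv g) := by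
  have h1 : AnalyticOnNhd ℂ g Set.univ := hg.differentiableOn.analyticOnNhd isOpen_univ
  have h2 := h1.deriv
  rw [← differentiableOn_univ]
  exact h2.differentiableOn

/-- Every entire function has an entire primitive. -/
lemma entire_primitive (g : ℂ → ℂ) (hg : Differentiable ℂ g) :
    ∃ G : ℂ → ℂ, Differentiable ℂ G ∧ ∀ z, deriv G z = g z := by
  classical
  set a : ℕ → ℂ := fun n => (n.factorial : ℂ)⁻¹ * iteratedDeriv n g 0 with ha
  have hsum : ∀ z : ℂ, HasSum (fun n => a n * z ^ n) (g z) := by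
    intro z
    have := Complex.hasSum_taylorSeries_of_entire hg 0 z
    simpa [a, smul_eq_mul, sub_zero, mul_comm, mul_assoc, mul_left_comm] using this
  set G : ℂ → ℂ := fun z => ∑' n : ℕ, (a n / (n + 1)) * z ^ (n + 1) with hG
  have key : ∀ z : ℂ, HasDerivAt G (g z) z := by
    intro z
    set R : ℝ := ‖z‖ + 1 with hR
    have hR0 : (0:ℝ) < R := by positivity
    have hzR : z ∈ ball (0:ℂ) R := by
      simp [hR, mem_ball, dist_eq_norm]
    have hu : Summable (fun n => ‖a n‖ * R ^ n) := by
      have h2 : Summable (fun n => ‖a n * ((2*R : ℝ) : ℂ) ^ n‖) := by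
        rw [summable_norm_iff]
        exact (hsum ((2*R : ℝ) : ℂ)).summable
      refine h2.of_nonneg_of_le (fun n => by positivity) (fun n => ?_)
      have heq : ‖a n * ((2*R : ℝ) : ℂ) ^ n‖ = ‖a n‖ * (2*R) ^ n := by
        rw [norm_mul, norm_pow, Complex.norm_real, Real.norm_eq_abs,
          _root_.abs_of_nonneg (by positivity : (0:ℝ) ≤ 2*R)]
      rw [heq]
      gcongr ‖a n‖ * ?_ ^ n
      linarith
    have := hasDerivAt_tsum_of_isPreconnected hu isOpen_ball
      (convex_ball (0:ℂ) R).isPreconnected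
      (g := fun n y => (a n / (n + 1)) * y ^ (n + 1))
      (g' := fun n y => a n * y ^ n)
      (fun n y hy => ?_) (fun n y hy => ?_)
      (Metric.mem_ball_self hR0) ?_ hzR
    · rw [(hsum z).tsum_eq] at this
      exact this
    · have h1 : HasDerivAt (fun y : ℂ => y ^ (n + 1)) (((n:ℂ) + 1) * y ^ n) y := by
        simpa using hasDerivAt_pow (n + 1) y
      have h2 := h1.const_mul (a n / (n + 1))
      refine h2.congr_deriv ?_
      have hne : ((n:ℂ) + 1) ≠ 0 := by
        exact_mod_cast n.succ_ne_zero
      field_simp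
    · rw [norm_mul, norm_pow]
      gcongr
      rw [mem_ball, dist_eq_norm, sub_zero] at hy
      exact hy.le
    · apply summable_of_ne_finset_zero (s := ∅)
      intro n _
      simp
  exact ⟨G, fun z => (key z).differentiableAt, fun z => (key z).deriv⟩

/-- Every nonvanishing entire function has an entire logarithm. -/
lemma entire_log (g : ℂ → ℂ) (hg : Differentiable ℂ g) (h0 : ∀ z, g z ≠ 0) :
    ∃ L : ℂ → ℂ, Differentiable ℂ L ∧ ∀ z, Complex.exp (L z) = g z := by
  obtain ⟨G, hGd, hG⟩ := entire_primitive (fun z => deriv g z / g z)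
    ((entire_deriv_differentiable g hg).div hg h0)
  have hφ : ∀ z, g z * Complex.exp (-G z) = g 0 * Complex.exp (-G 0) := by
    have hd : Differentiable ℂ fun z => g z * Complex.exp (-G z) :=
      hg.mul ((hGd.neg).cexp)
    intro z
    refine is_const_of_deriv_eq_zero hd (fun x => ?_) z 0
    have h1 : HasDerivAt g (deriv g x) x := (hg x).hasDerivAt
    have h2 : HasDerivAt (fun z => Complex.exp (-G z))
        (-(deriv g x / g x) * Complex.exp (-G x)) x := by
      have h3 : HasDerivAt (fun z => -G z) (-(deriv g x / g x)) x := by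
        have := (hGd x).hasDerivAt
        rw [show deriv G x = deriv g x / g x from hG x] at this
        exact this.neg
      simpa [mul_comm] using h3.cexp
    rw [(h1.fun_mul h2).deriv]
    field_simp [h0 x]
    ring
  set c := g 0 * Complex.exp (-G 0) with hc
  have hc0 : c ≠ 0 := mul_ne_zero (h0 0) (Complex.exp_ne_zero _)
  refine ⟨fun z => G z + Complex.log c, hGd.add_const _, fun z => ?_⟩
  have e1 : Complex.exp (-G z) * Complex.exp (G z) = 1 := by
    rw [← Complex.exp_add]; simp
  calc Complex.exp (G z + Complex.log c)
      = Complex.exp (Complex.log c) * Complex.exp (G z) := by rw [← Complex.exp_add]; ring_nf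
    _ = c * Complex.exp (G z) := by rw [Complex.exp_log hc0]
    _ = (g z * Complex.exp (-G z)) * Complex.exp (G z) := by rw [hφ z]
    _ = g z * (Complex.exp (-G z) * Complex.exp (G z)) := by ring
    _ = g z := by rw [e1, mul_one]

lemma entire_dslope {h : ℂ → ℂ} (hh : Differentiable ℂ h) (c : ℂ) :
    Differentiable ℂ (dslope h c) := by
  intro b
  rcases eq_or_ne b c with rfl | hb
  · have h1 : AnalyticAt ℂ h b :=
      (hh.differentiableOn.analyticOnNhd isOpen_univ) b trivial
    obtain ⟨p, hp⟩ := h1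
    exact hp.has_fpower_series_dslope_fslope.differentiableAt
  · exact (differentiableAt_dslope_of_ne hb).2 (hh b)

/-- Quadratic Taylor remainder bound via the maximum principle. -/
lemma taylor_remainder_bound {h : ℂ → ℂ} (hh : Differentiable ℂ h) (c : ℂ) {s M : ℝ}
    (hs : 0 < s) (hM : ∀ z ∈ closedBall c s, ‖h z - h c‖ ≤ M) :
    ∀ z ∈ closedBall c s, ‖h z - h c - (z - c) * deriv h c‖ ≤ 2 * M * (dist z c)^2 / s^2 := by
  set φ : ℂ → ℂ := dslope (dslope h c) c with hφ
  have hφd : Differentiable ℂ φ := entire_dslope (entire_dslope hh c) c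
  have hid : ∀ z : ℂ, (z - c)^2 * φ z = h z - h c - (z - c) * deriv h c := by
    intro z
    have e1 : (z - c) • dslope h c z = h z - h c := sub_smul_dslope h c z
    have e2 : (z - c) • φ z = dslope h c z - dslope h c c := sub_smul_dslope (dslope h c) c z
    rw [dslope_same] at e2
    simp only [smul_eq_mul] at e1 e2
    calc (z - c)^2 * φ z = (z - c) * ((z - c) * φ z) := by ring
      _ = (z - c) * (dslope h c z - deriv h c) := by rw [e2]
      _ = (z - c) * dslope h c z - (z - c) * deriv h c := by ring
      _ = h z - h c - (z - c) * deriv h c := by rw [e1]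
  have hderiv : ‖deriv h c‖ ≤ M / s := by
    have hd : DiffContOnCl ℂ (fun z => h z - h c) (ball c s) :=
      (hh.sub_const (h c)).diffContOnCl
    have := Complex.norm_deriv_le_of_forall_mem_sphere_norm_le hs hd
      (fun z hz => hM z (sphere_subset_closedBall hz))
    rwa [deriv_sub_const] at this
  have hMnn : 0 ≤ M := le_trans (norm_nonneg _) (hM c (mem_closedBall_self hs.le))
  have hbound : ∀ z ∈ closedBall c s, ‖φ z‖ ≤ 2 * M / s^2 := by
    intro z hz
    have hcl : z ∈ closure (ball c s) := by rwa [closure_ball c hs.ne']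
    refine Complex.norm_le_of_forall_mem_frontier_norm_le isBounded_ball
      hφd.diffContOnCl (fun x hx => ?_) hcl
    rw [frontier_ball c hs.ne'] at hx
    have hxc : ‖x - c‖ = s := mem_sphere_iff_norm.1 hx
    have hxcb : x ∈ closedBall c s := sphere_subset_closedBall hx
    have : ‖(x - c)^2 * φ x‖ = s^2 * ‖φ x‖ := by
      rw [norm_mul, norm_pow, hxc]
    have hnum : ‖(x - c)^2 * φ x‖ ≤ 2 * M := by
      rw [hid x]
      calc ‖h x - h c - (x - c) * deriv h c‖
          ≤ ‖h x - h c‖ + ‖(x - c) * deriv h c‖ := norm_sub_le _ _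
        _ ≤ M + s * (M / s) := by
            have e3 : ‖(x - c) * deriv h c‖ = s * ‖deriv h c‖ := by
              rw [norm_mul, hxc]
            rw [e3]
            gcongr
            exact hM x hxcb
        _ = 2 * M := by field_simp; ring
    rw [this] at hnum
    rw [le_div_iff₀ (by positivity : (0:ℝ) < s^2), mul_comm]
    exact hnum
  intro z hz
  have h1 : ‖h z - h c - (z - c) * deriv h c‖ = ‖z - c‖^2 * ‖φ z‖ := by
    rw [← hid z, norm_mul, norm_pow]
  rw [h1, dist_eq_norm]
  have h2 := hbound z hz
  have h3 : (0:ℝ) ≤ ‖z - c‖^2 := by positivity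
  calc ‖z - c‖^2 * ‖φ z‖ ≤ ‖z - c‖^2 * (2 * M / s^2) := by gcongr
    _ = 2 * M * ‖z - c‖^2 / s^2 := by ring

/-- If `‖h z - h p‖ ≥ ρ` on a sphere around `p`, then the ball of radius `ρ/2`
around `h p` is in the range of the entire function `h`. -/
lemma ball_subset_range {h : ℂ → ℂ} (hh : Differentiable ℂ h) (p : ℂ) {r ρ : ℝ} (hr : 0 < r)
    (hlow : ∀ z ∈ sphere p r, ρ ≤ ‖h z - h p‖) :
    ball (h p) (ρ/2) ⊆ Set.range h := by
  intro w hw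
  by_contra hwn
  have hne : ∀ z, h z ≠ w := by
    intro z hz
    exact hwn ⟨z, hz⟩
  rw [mem_ball, dist_comm, dist_eq_norm] at hw
  have hρ : 0 < ρ := by
    have := norm_nonneg (h p - w)
    linarith
  set F : ℂ → ℂ := fun z => (h z - w)⁻¹ with hF
  have hFd : Differentiable ℂ F :=
    (hh.sub_const w).inv (fun z => sub_ne_zero.2 (hne z))
  have hbdry : ∀ x ∈ frontier (ball p r), ‖F x‖ ≤ (ρ/2)⁻¹ := by
    intro x hx
    rw [frontier_ball p hr.ne'] at hx
    have h1 : ρ/2 ≤ ‖h x - w‖ := by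
      have t1 : ‖h x - h p‖ ≤ ‖h x - w‖ + ‖w - h p‖ := by
        calc ‖h x - h p‖ = ‖(h x - w) + (w - h p)‖ := by ring_nf
          _ ≤ ‖h x - w‖ + ‖w - h p‖ := norm_add_le _ _
      have t2 : ‖w - h p‖ < ρ/2 := by rwa [norm_sub_rev] at hw
      have t3 := hlow x hx
      linarith
    rw [hF]
    simp only [norm_inv]
    exact inv_anti₀ (by positivity) h1
  have hFp : ‖F p‖ ≤ (ρ/2)⁻¹ := by
    refine Complex.norm_le_of_forall_mem_frontier_norm_le isBounded_ball
      hFd.diffContOnCl hbdry ?_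
    rw [closure_ball p hr.ne']
    exact mem_closedBall_self hr.le
  rw [hF] at hFp
  simp only [norm_inv] at hFp
  have h2 : ρ/2 ≤ ‖h p - w‖ := by
    have hpw : 0 < ‖h p - w‖ := norm_pos_iff.2 (sub_ne_zero.2 (hne p))
    rw [inv_le_inv₀ hpw (by positivity)] at hFp
    exact hFp
  linarith

/-- Bloch-type theorem for entire functions. -/
lemma bloch_entire {g : ℂ → ℂ} (hg : Differentiable ℂ g) (z₀ : ℂ) {R : ℝ} (hR : 0 < R) :
    ∃ p : ℂ, ball (g p) (R * ‖deriv g z₀‖ / 100) ⊆ Set.range g := by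
  rcases eq_or_ne (deriv g z₀) 0 with h0 | h0
  · refine ⟨z₀, ?_⟩
    rw [h0]
    simp
  have hμ₀ : 0 < ‖deriv g z₀‖ := norm_pos_iff.2 h0
  set K : ℂ → ℝ := fun z => (R - dist z z₀) * ‖deriv g z‖ with hK
  have hKcont : Continuous K := by
    apply Continuous.mul
    · exact continuous_const.sub (continuous_id.dist continuous_const)
    · exact ((entire_deriv_differentiable g hg).continuous).norm
  obtain ⟨p, hpmem, hpmax⟩ := (isCompact_closedBall z₀ R).exists_isMaxOn
    ⟨z₀, mem_closedBall_self hR.le⟩ hKcont.continuousOn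
  have hKz₀ : K z₀ = R * ‖deriv g z₀‖ := by simp [hK]
  have hKp : R * ‖deriv g z₀‖ ≤ K p := by
    rw [← hKz₀]
    exact hpmax (mem_closedBall_self hR.le)
  have hKppos : 0 < K p := lt_of_lt_of_le (by positivity) hKp
  have hdp : dist p z₀ < R := by
    by_contra hc
    push_neg at hc
    have : K p ≤ 0 := mul_nonpos_of_nonpos_of_nonneg (by linarith) (norm_nonneg _)
    linarith
  set s : ℝ := (R - dist p z₀)/2 with hs
  have hs0 : 0 < s := by simp only [hs]; linarith
  have hKps : K p = 2 * s * ‖deriv g p‖ := by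
    rw [hK]
    simp only [hs]
    ring
  -- derivative bound on closedBall p s
  have hderiv_bound : ∀ z ∈ closedBall p s, ‖deriv g z‖ ≤ K p / s := by
    intro z hz
    rw [mem_closedBall] at hz
    have hzz₀ : dist z z₀ ≤ R - s := by
      calc dist z z₀ ≤ dist z p + dist p z₀ := dist_triangle _ _ _
        _ ≤ s + dist p z₀ := by linarith
        _ = R - s := by simp only [hs]; ring
    have hzcb : z ∈ closedBall z₀ R := by
      rw [mem_closedBall]; linarith
    have h1 : K z ≤ K p := hpmax hzcb
    have h2 : s * ‖deriv g z‖ ≤ K z := by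
      simp only [hK]
      have := norm_nonneg (deriv g z)
      nlinarith
    rw [le_div_iff₀ hs0, mul_comm]
    linarith
  -- sup bound
  have hM : ∀ z ∈ closedBall p s, ‖g z - g p‖ ≤ K p := by
    intro z hz
    have := Convex.norm_image_sub_le_of_norm_hasDerivWithin_le
      (f := g) (f' := deriv g) (s := closedBall p s) (C := K p / s)
      (fun x _ => (hg x).hasDerivAt.hasDerivWithinAt) hderiv_bound
      (convex_closedBall p s) (mem_closedBall_self hs0.le) hz
    calc ‖g z - g p‖ ≤ K p / s * ‖z - p‖ := this
      _ ≤ K p / s * s := by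
          refine mul_le_mul_of_nonneg_left ?_ (div_nonneg hKppos.le hs0.le)
          rw [← dist_eq_norm]; exact mem_closedBall.1 hz
      _ = K p := by field_simp
  -- lower bound on sphere p (s/16)
  have hlow : ∀ z ∈ sphere p (s/16), 3 * K p / 128 ≤ ‖g z - g p‖ := by
    intro z hz
    have hzc : ‖z - p‖ = s/16 := mem_sphere_iff_norm.1 hz
    have hzcb : z ∈ closedBall p s := by
      rw [mem_closedBall, dist_eq_norm, hzc]
      linarith
    have htr := taylor_remainder_bound hg p hs0 hM z hzcb
    have hdist : dist z p = s/16 := by rw [dist_eq_norm, hzc]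
    rw [hdist] at htr
    have hmain : ‖(z - p) * deriv g p‖ = s/16 * (K p / (2*s)) := by
      rw [norm_mul, hzc]
      congr 1
      rw [hKps]
      field_simp
    have t1 : ‖g z - g p‖ ≥ ‖(z - p) * deriv g p‖ - ‖g z - g p - (z - p) * deriv g p‖ := by
      have := norm_sub_norm_le ((z - p) * deriv g p) ((z-p) * deriv g p - (g z - g p))
      have e : (z - p) * deriv g p - ((z-p) * deriv g p - (g z - g p)) = g z - g p := by ring
      rw [e] at this
      have e2 : ‖(z - p) * deriv g p - (g z - g p)‖ = ‖g z - g p - (z - p) * deriv g p‖ :=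
        norm_sub_rev _ _
      linarith [this, e2]
    have t2 : 2 * K p * (s/16)^2 / s^2 = K p / 128 := by
      field_simp
      ring
    rw [t2] at htr
    have t3 : s/16 * (K p / (2*s)) = K p / 32 := by
      field_simp
      ring
    rw [hmain, t3] at t1
    linarith
  have hball := ball_subset_range hg p (by positivity : (0:ℝ) < s/16) hlow
  refine ⟨p, subset_trans (ball_subset_ball ?_) hball⟩
  rw [div_le_div_iff₀ (by norm_num) (by norm_num)] at *
  nlinarith [hKp, hKppos]

/-- near every nonneg real there is `r` with `cosh (2r)` an odd integer -/
lemma exists_odd_cosh_near (x : ℝ) (hx : 0 ≤ x) :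
    ∃ r : ℝ, |x - r| ≤ 1 ∧ ∃ k : ℤ, Odd k ∧ Real.cosh (2*r) = k := by
  rcases le_or_gt x 1 with h | h
  · refine ⟨0, by rw [sub_zero, _root_.abs_of_nonneg hx]; exact h, 1, odd_one, by norm_num⟩
  · set A := Real.cosh (2*(x-1)) with hA
    set B := Real.cosh (2*(x+1)) with hB
    set k : ℤ := 2 * ⌊(A+1)/2⌋ + 1 with hk
    have hkodd : Odd k := odd_two_mul_add_one _
    have hkA : A < (k:ℝ) := by
      have := Int.sub_one_lt_floor ((A+1)/2)
      have hcast : (k:ℝ) = 2 * (⌊(A+1)/2⌋ : ℝ) + 1 := by rw [hk]; push_cast; ring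
      rw [hcast]; linarith
    have hkA2 : (k:ℝ) ≤ A + 2 := by
      have := Int.floor_le ((A+1)/2)
      have hcast : (k:ℝ) = 2 * (⌊(A+1)/2⌋ : ℝ) + 1 := by rw [hk]; push_cast; ring
      rw [hcast]; linarith
    have hBA : A + 2 ≤ B := by
      have h4 : B = A * Real.cosh 4 + Real.sinh (2*(x-1)) * Real.sinh 4 := by
        rw [hB, hA, show 2*(x+1) = 2*(x-1) + 4 by ring, Real.cosh_add]
      have hsnn : 0 ≤ Real.sinh (2*(x-1)) := Real.sinh_nonneg_iff.2 (by linarith)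
      have hs4 : 0 ≤ Real.sinh 4 := Real.sinh_nonneg_iff.2 (by norm_num)
      have hA1 : 1 ≤ A := Real.one_le_cosh _
      have hc4 : (3:ℝ) ≤ Real.cosh 4 := by
        have he2 : (3:ℝ) ≤ Real.exp 2 := by
          have := Real.add_one_le_exp 2
          linarith
        have he4 : (9:ℝ) ≤ Real.exp 4 := by
          have : Real.exp 4 = Real.exp 2 * Real.exp 2 := by
            rw [← Real.exp_add]; norm_num
          nlinarith [Real.exp_pos 2]
        rw [Real.cosh_eq]
        have := Real.exp_pos (-4:ℝ)
        linarith
      nlinarith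
    have hIcc : (k:ℝ) ∈ Icc A B := ⟨hkA.le, by linarith⟩
    have hcont : ContinuousOn (fun t : ℝ => Real.cosh (2*t)) (Icc (x-1) (x+1)) :=
      (Real.continuous_cosh.comp (continuous_const.mul continuous_id)).continuousOn
    have := intermediate_value_Icc (by linarith : x - 1 ≤ x + 1) hcont
    obtain ⟨r, hr, hrk⟩ := this hIcc
    refine ⟨r, ?_, k, hkodd, hrk⟩
    rw [abs_le]
    constructor <;> [linarith [hr.2]; linarith [hr.1]]

/-- Near every complex number there is a point whose `cosh` squared is an integer. -/
lemma cosh_net (w : ℂ) : ∃ e : ℂ, dist w e ≤ 3 ∧ ∃ m : ℤ, (Complex.cosh e)^2 = m := by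
  obtain ⟨r, hr, k, hkodd, hk⟩ := exists_odd_cosh_near |w.re| (abs_nonneg _)
  set n : ℤ := round (w.im / Real.pi) with hn
  set σ : ℝ := if 0 ≤ w.re then 1 else -1 with hσ
  set e : ℂ := (σ * r : ℝ) + (n * Real.pi : ℝ) * I with he
  have him : |w.im - n * Real.pi| ≤ Real.pi / 2 := by
    have h1 := abs_sub_round (w.im / Real.pi)
    have hπ : (0:ℝ) < Real.pi := Real.pi_pos
    have h3 : w.im - n * Real.pi = (w.im / Real.pi - n) * Real.pi := by
      field_simp
    rw [h3, abs_mul, _root_.abs_of_pos hπ]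
    have h2 := mul_le_mul_of_nonneg_right h1 hπ.le
    linarith
  have hre : |w.re - σ * r| ≤ 1 := by
    rcases le_or_gt 0 w.re with hp | hp
    · have hσ1 : σ = 1 := by rw [hσ, if_pos hp]
      rw [hσ1, one_mul]
      rwa [_root_.abs_of_nonneg hp] at hr
    · have hσ1 : σ = -1 := by rw [hσ, if_neg (not_le.2 hp)]
      rw [hσ1]
      have heq : |w.re - (-1) * r| = |(|w.re| - r)| := by
        rw [_root_.abs_of_neg hp, ← abs_neg]
        congr 1
        ring
      rw [heq]
      exact hr
  refine ⟨e, ?_, ?_⟩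
  · have h1 : dist w e ≤ |(w - e).re| + |(w - e).im| := by
      rw [dist_eq_norm]
      exact Complex.norm_le_abs_re_add_abs_im (w - e)
    have hre' : (w - e).re = w.re - σ * r := by
      rw [he]
      simp [Complex.sub_re, Complex.add_re, Complex.mul_re, Complex.I_re, Complex.I_im]
    have him' : (w - e).im = w.im - n * Real.pi := by
      rw [he]
      simp [Complex.sub_im, Complex.add_im, Complex.mul_im, Complex.I_re, Complex.I_im]
    rw [hre', him'] at h1
    have hπ4 : Real.pi ≤ 4 := Real.pi_le_four
    calc dist w e ≤ |w.re - σ * r| + |w.im - n * Real.pi| := h1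
      _ ≤ 1 + Real.pi / 2 := by gcongr
      _ ≤ 3 := by linarith
  · -- cosh e squared is an integer
    have h2e : (2:ℂ) * e = (2 * (σ * r) : ℝ) + (n:ℂ) * (2 * Real.pi) * I := by
      rw [he]; push_cast; ring
    have hcosh2e : Complex.cosh (2 * e) = (k:ℂ) := by
      rw [h2e, Complex.cosh_add]
      have hc : Complex.cosh ((n:ℂ) * (2 * Real.pi) * I) = 1 := by
        have : ((n:ℂ) * (2 * Real.pi)) * I = ((n:ℂ) * (2 * (Real.pi:ℂ))) * I := by push_cast; ring
        rw [this, Complex.cosh_mul_I, Complex.cos_int_mul_two_pi]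
      have hs : Complex.sinh ((n:ℂ) * (2 * Real.pi) * I) = 0 := by
        rw [Complex.sinh_mul_I]
        have : Complex.sin ((n:ℂ) * (2 * Real.pi)) = Complex.sin (((2*n : ℤ) : ℂ) * Real.pi) := by
          congr 1; push_cast; ring
        rw [this, Complex.sin_int_mul_pi, zero_mul]
      rw [hc, hs, mul_one, mul_zero, add_zero]
      -- cosh (2σr) = cosh (2r) = k
      have hev : Complex.cosh ((2 * (σ * r) : ℝ) : ℂ) = Complex.cosh ((2*r : ℝ) : ℂ) := by
        rcases le_or_gt 0 w.re with hp | hp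
        · rw [hσ, if_pos hp]; norm_num
        · rw [hσ, if_neg (not_le.2 hp)]
          have : ((2 * (-1 * r) : ℝ) : ℂ) = -((2*r : ℝ) : ℂ) := by push_cast; ring
          rw [this, Complex.cosh_neg]
      rw [hev, ← Complex.ofReal_cosh, hk]
      norm_num
    obtain ⟨j, hj⟩ := hkodd
    refine ⟨j + 1, ?_⟩
    have hsq : Complex.cosh e ^ 2 = (Complex.cosh (2*e) + 1) / 2 := by
      have h1 : Complex.cosh (2*e) = Complex.cosh e ^2 + Complex.sinh e ^2 := Complex.cosh_two_mul e
      have h2 : Complex.cosh e ^2 - Complex.sinh e ^2 = 1 := Complex.cosh_sq_sub_sinh_sq e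
      rw [h1]
      field_simp
      linear_combination h2
    rw [hsq, hcosh2e, hj]
    push_cast
    ring
/-- a nonconstant entire function contains balls of radius `4` in its range -/
lemma exists_ball_four {v : ℂ → ℂ} (hv : Differentiable ℂ v) {z₀ : ℂ}
    (h0 : deriv v z₀ ≠ 0) : ∃ p : ℂ, ball (v p) 4 ⊆ Set.range v := by
  have hnorm : 0 < ‖deriv v z₀‖ := norm_pos_iff.2 h0
  obtain ⟨p, hp⟩ := bloch_entire hv z₀ (R := 400 / ‖deriv v z₀‖) (by positivity)
  refine ⟨p, ?_⟩
  have : 400 / ‖deriv v z₀‖ * ‖deriv v z₀‖ / 100 = 4 := by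
    rw [div_mul_cancel₀ _ hnorm.ne']
    norm_num
  rwa [this] at hp

/-- Little Picard: an entire function omitting `0` and `1` is constant. -/
lemma picard01 {g : ℂ → ℂ} (hg : Differentiable ℂ g) (h0 : ∀ z, g z ≠ 0)
    (h1 : ∀ z, g z ≠ 1) : ∀ z w, g z = g w := by
  obtain ⟨L, hLd, hL⟩ := entire_log g hg h0
  have h2πI : (2 * (Real.pi:ℂ) * I) ≠ 0 := by
    simp [Real.pi_ne_zero, Complex.I_ne_zero]
  set p : ℂ → ℂ := fun z => L z / (2 * (Real.pi:ℂ) * I) with hp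
  have hpd : Differentiable ℂ p := hLd.div_const _
  have hpZ : ∀ z (m : ℤ), p z ≠ m := by
    intro z m hzm
    have hLz : L z = m * (2 * (Real.pi:ℂ) * I) := by
      rw [hp] at hzm
      field_simp at hzm
      linear_combination hzm
    have : g z = 1 := by
      rw [← hL z, hLz, Complex.exp_int_mul_two_pi_mul_I]
    exact h1 z this
  have hp0 : ∀ z, p z ≠ 0 := fun z h => hpZ z 0 (by simpa using h)
  have hp1 : ∀ z, p z ≠ 1 := fun z h => hpZ z 1 (by simpa using h)
  obtain ⟨L₁, hL₁d, hL₁⟩ := entire_log p hpd hp0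
  obtain ⟨L₂, hL₂d, hL₂⟩ := entire_log (fun z => p z - 1) (hpd.sub_const 1)
    (fun z => sub_ne_zero.2 (hp1 z))
  set sf : ℂ → ℂ := fun z => Complex.exp (L₁ z / 2) with hsf
  set tf : ℂ → ℂ := fun z => Complex.exp (L₂ z / 2) with htf
  have hsfd : Differentiable ℂ sf := (hL₁d.div_const 2).cexp
  have htfd : Differentiable ℂ tf := (hL₂d.div_const 2).cexp
  have hs2 : ∀ z, sf z ^ 2 = p z := by
    intro z
    rw [hsf]
    simp only [sq, ← Complex.exp_add]
    rw [show L₁ z / 2 + L₁ z / 2 = L₁ z by ring, hL₁ z]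
  have ht2 : ∀ z, tf z ^ 2 = p z - 1 := by
    intro z
    rw [htf]
    simp only [sq, ← Complex.exp_add]
    rw [show L₂ z / 2 + L₂ z / 2 = L₂ z by ring, hL₂ z]
  have hst : ∀ z, (sf z - tf z) * (sf z + tf z) = 1 := by
    intro z
    have : (sf z - tf z) * (sf z + tf z) = sf z ^2 - tf z ^2 := by ring
    rw [this, hs2 z, ht2 z]
    ring
  have hsum_ne : ∀ z, sf z + tf z ≠ 0 := by
    intro z hz
    have := hst z
    rw [hz, mul_zero] at this
    exact zero_ne_one this
  obtain ⟨v, hvd, hv⟩ := entire_log (fun z => sf z + tf z) (hsfd.add htfd) hsum_ne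
  have hcosh : ∀ z, Complex.cosh (v z) = sf z := by
    intro z
    have hinv : Complex.exp (-(v z)) = sf z - tf z := by
      rw [Complex.exp_neg, hv z]
      exact (eq_inv_of_mul_eq_one_left (hst z)).symm
    have h2c := Complex.two_cosh (v z)
    rw [hv z, hinv] at h2c
    have h2 : (2:ℂ) * Complex.cosh (v z) = 2 * sf z := by rw [h2c]; ring
    exact mul_left_cancel₀ two_ne_zero h2
  have hvconst : ∀ z w, v z = v w := by
    by_cases hd : ∀ x, deriv v x = 0
    · exact is_const_of_deriv_eq_zero hvd hd
    · push_neg at hd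
      obtain ⟨z₀, hz₀⟩ := hd
      obtain ⟨q, hq⟩ := exists_ball_four hvd hz₀
      obtain ⟨e, he3, m, hm⟩ := cosh_net (v q)
      have hee : e ∈ ball (v q) 4 := by
        rw [mem_ball, dist_comm]
        linarith
      obtain ⟨zz, hzz⟩ := hq hee
      exfalso
      apply hpZ zz m
      rw [← hs2 zz, ← hcosh zz, hzz, hm]
  intro z w
  have hpzw : p z = p w := by
    rw [← hs2 z, ← hs2 w, ← hcosh z, ← hcosh w, hvconst z w]
  have hLzw : ∀ u : ℂ, L u = p u * (2 * (Real.pi:ℂ) * I) := by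
    intro u
    rw [hp]
    field_simp
  rw [← hL z, ← hL w, hLzw z, hLzw w, hpzw]

/-- Little Picard: an entire function omitting two values is constant. -/
lemma littlePicard {g : ℂ → ℂ} (hg : Differentiable ℂ g) {a b : ℂ} (hab : a ≠ b)
    (ha : ∀ z, g z ≠ a) (hb : ∀ z, g z ≠ b) : ∀ z w, g z = g w := by
  have hba : (b - a) ≠ 0 := sub_ne_zero.2 (Ne.symm hab)
  set G : ℂ → ℂ := fun z => (g z - a) / (b - a) with hG
  have hGd : Differentiable ℂ G := (hg.sub_const a).div_const _
  have hG0 : ∀ z, G z ≠ 0 := by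
    intro z h
    rw [hG] at h
    simp only [div_eq_zero_iff] at h
    rcases h with h | h
    · exact ha z (sub_eq_zero.1 h)
    · exact hba h
  have hG1 : ∀ z, G z ≠ 1 := by
    intro z h
    rw [hG] at h
    simp only [div_eq_one_iff_eq hba] at h
    exact hb z (by linear_combination h)
  intro z w
  have := picard01 hGd hG0 hG1 z w
  rw [hG] at this
  simp only [div_eq_div_iff hba hba] at this
  have := mul_right_cancel₀ hba this
  linear_combination this

end PicardAux

/-- The partial derivative ∂f/∂z_i of f : ℂⁿ → ℂ at z. -/
noncomputable def pd {n : ℕ} (f : EuclideanSpace ℂ (Fin n) → ℂ) (i : Fin n)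
    (z : EuclideanSpace ℂ (Fin n)) : ℂ :=
  fderiv ℂ f z (EuclideanSpace.single i 1)

/-- If `f` is entire on ℂⁿ and the product
∏ᵢ (∂f/∂zᵢ − a)(∂f/∂zᵢ − b)(∂f/∂zᵢ − f) never vanishes, then `f` is constant. -/
theorem stmt_0 {n : ℕ} (hn : 1 ≤ n) (a b : ℂ) (hab : a ≠ b)
    (f : EuclideanSpace ℂ (Fin n) → ℂ) (hf : AnalyticOnNhd ℂ f Set.univ)
    (h : ∀ z, (∏ i : Fin n,
      (pd f i z - a) * (pd f i z - b) * (pd f i z - f z)) ≠ 0) :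
    ∀ z w, f z = f w := by
  classical
  have hfac : ∀ z i, (pd f i z - a) ≠ 0 ∧ (pd f i z - b) ≠ 0 ∧ (pd f i z - f z) ≠ 0 := by
    intro z i
    have hi : (pd f i z - a) * (pd f i z - b) * (pd f i z - f z) ≠ 0 := by
      intro h0
      exact h z (Finset.prod_eq_zero (Finset.mem_univ i) h0)
    refine ⟨?_, ?_, ?_⟩ <;> intro h' <;> apply hi <;> rw [h'] <;> ring
  have hfdiff : Differentiable ℂ f := fun z => (hf z trivial).differentiableAt
  have hfderiv_an : AnalyticOnNhd ℂ (fderiv ℂ f) Set.univ := hf.fderiv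
  have hpd_diff : ∀ i, Differentiable ℂ (pd f i) := by
    intro i z
    have h1 : DifferentiableAt ℂ (fderiv ℂ f) z := (hfderiv_an z trivial).differentiableAt
    exact ((ContinuousLinearMap.apply ℂ ℂ (EuclideanSpace.single i 1)).differentiable.differentiableAt).comp z h1
  have hpd_const : ∀ (i : Fin n) z w, pd f i z = pd f i w := by
    intro i z w
    set lineF : ℂ → EuclideanSpace ℂ (Fin n) := fun t => z + t • (w - z) with hlineF
    have hline : Differentiable ℂ lineF :=
      (differentiable_const z).add (differentiable_id.smul_const (w - z))
    have hgd : Differentiable ℂ (fun t => pd f i (lineF t)) := (hpd_diff i).comp hline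
    have hga : ∀ t, pd f i (lineF t) ≠ a := fun t => sub_ne_zero.mp (hfac (lineF t) i).1
    have hgb : ∀ t, pd f i (lineF t) ≠ b := fun t => sub_ne_zero.mp (hfac (lineF t) i).2.1
    have := littlePicard hgd hab hga hgb 0 1
    simpa [hlineF] using this
  have hL : ∀ z, fderiv ℂ f z = fderiv ℂ f 0 := by
    intro z
    apply ContinuousLinearMap.coe_injective
    apply Module.Basis.ext (EuclideanSpace.basisFun (Fin n) ℂ).toBasis
    intro i
    have := hpd_const i z 0
    simpa [pd, EuclideanSpace.basisFun_apply, OrthonormalBasis.coe_toBasis] using this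
  set L := fderiv ℂ f 0 with hLdef
  have haffine : ∀ z, f z = f 0 + L z := by
    have hdiff2 : Differentiable ℂ (fun z => f z - L z) := hfdiff.sub L.differentiable
    have hzero : ∀ z, fderiv ℂ (fun z => f z - L z) z = 0 := by
      intro z
      rw [fderiv_fun_sub (hfdiff z) L.differentiableAt, L.fderiv, hL z]
      simp
    intro z
    have hconst := is_const_of_fderiv_eq_zero hdiff2 hzero z 0
    have hmz : L (0 : EuclideanSpace ℂ (Fin n)) = 0 := map_zero L
    rw [hmz, sub_zero] at hconst
    linear_combination hconst
  by_cases hL0 : ∀ i : Fin n, L (EuclideanSpace.single i 1) = 0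
  · have hLz : ∀ z, L z = 0 := by
      intro z
      have : L = 0 := by
        apply ContinuousLinearMap.coe_injective
        apply Module.Basis.ext (EuclideanSpace.basisFun (Fin n) ℂ).toBasis
        intro i
        simpa [EuclideanSpace.basisFun_apply, OrthonormalBasis.coe_toBasis] using hL0 i
      rw [this]; rfl
    intro z w
    rw [haffine z, haffine w, hLz z, hLz w]
  · push_neg at hL0
    obtain ⟨i, hci⟩ := hL0
    exfalso
    set c := L (EuclideanSpace.single i 1) with hc
    set zz : EuclideanSpace ℂ (Fin n) := ((c - f 0)/c) • EuclideanSpace.single i 1 with hzz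
    have hfz : f zz = c := by
      rw [haffine zz, hzz, map_smul]
      simp only [smul_eq_mul, ← hc]
      field_simp
      ring
    have hpdz : pd f i zz = c := by
      rw [pd, hL zz, ← hc]
    exact (hfac zz i).2.2 (by rw [hpdz, hfz, sub_self])
end

section
/- Let n ≥ 1 and let 0 < r < 1/n, so that the polydisc D^n(0,r) = {z ∈ ℂⁿ : |z_j| < r for all j} does not meet the hyperplane {z : z_1 + ⋯ + z_n = 1}. For each integer m ≥ 3 define f_m : D^n(0,r) → ℂ by f_m(z) = m(z_1 + ⋯ + z_n). Then: (1) for every m ≥ 3 and every z ∈ D^n(0,r), the product ∏_{i=1}^n (∂f_m/∂z_i(z) − 1)·(∂f_m/∂z_i(z) − 2)·(∂f_m/∂z_i(z) − f_m(z)) is nonzero; and (2) the family {f_m : m ≥ 3} is not normal in D^n(0,r), i.e., the sequence (f_m)_{m≥3} has no subsequence that converges locally uniformly on D^n(0,r). -/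
open Filter Topology Metric

/-- Counterexample to Bloch's principle: on the polydisc Dⁿ(0,r) with 0 < r < 1/n,
the functions f_m(z) = m(z₁ + ⋯ + z_n), m ≥ 3, all satisfy the omission property
∏ᵢ (∂f_m/∂zᵢ − 1)(∂f_m/∂zᵢ − 2)(∂f_m/∂zᵢ − f_m) ≠ 0, yet the family
{f_m : m ≥ 3} is not normal (no subsequence converges locally uniformly). -/
theorem stmt_1 {n : ℕ} (hn : 1 ≤ n) (r : ℝ) (hr : 0 < r) (hr' : r < 1 / n)
    (P : Set (EuclideanSpace ℂ (Fin n)))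
    (hP : P = {z : EuclideanSpace ℂ (Fin n) | ∀ j, ‖z j‖ < r})
    (f : ℕ → EuclideanSpace ℂ (Fin n) → ℂ)
    (hf : ∀ m, ∀ z, f m z = (m : ℂ) * ∑ j, z j) :
    (∀ m : ℕ, 3 ≤ m → ∀ z ∈ P, (∏ i : Fin n,
        (pd (f m) i z - 1) * (pd (f m) i z - 2) * (pd (f m) i z - f m z)) ≠ 0) ∧
    ¬ ∃ φ : ℕ → ℕ, StrictMono φ ∧ (∀ j, 3 ≤ φ j) ∧
        ∃ g : EuclideanSpace ℂ (Fin n) → ℂ,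
          TendstoLocallyUniformlyOn (fun j => f (φ j)) g atTop P := by
  -- the continuous linear map z ↦ ∑ z j
  set T : EuclideanSpace ℂ (Fin n) →L[ℂ] ℂ := ∑ j : Fin n, EuclideanSpace.proj j with hT
  have hTapp : ∀ z : EuclideanSpace ℂ (Fin n), T z = ∑ j, z j := by
    intro z
    simp [hT, ContinuousLinearMap.sum_apply]
  have hderiv : ∀ m : ℕ, ∀ z, HasFDerivAt (f m) ((m : ℂ) • T) z := by
    intro m z
    have : HasFDerivAt (fun z : EuclideanSpace ℂ (Fin n) => (m : ℂ) * T z) ((m : ℂ) • T) z :=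
      (T.hasFDerivAt).const_mul _
    refine this.congr_of_eventuallyEq ?_
    filter_upwards with w
    rw [hf m w, hTapp]
  have hpd : ∀ m : ℕ, ∀ i z, pd (f m) i z = (m : ℂ) := by
    intro m i z
    rw [pd, (hderiv m z).fderiv]
    simp [hTapp, EuclideanSpace.single_apply, Finset.sum_ite_eq']
  constructor
  · intro m hm z hz
    have hm1 : (m : ℂ) ≠ 1 := by
      intro h
      have : m = 1 := by exact_mod_cast h
      omega
    have hm2 : (m : ℂ) ≠ 2 := by
      intro h
      have : m = 2 := by exact_mod_cast h
      omega
    have hsum : ‖∑ j, z j‖ < 1 := by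
      calc ‖∑ j, z j‖ ≤ ∑ j : Fin n, ‖z j‖ :=
            norm_sum_le _ _
        _ < ∑ j : Fin n, r := by
            apply Finset.sum_lt_sum_of_nonempty
            · exact Finset.univ_nonempty_iff.mpr (Fin.pos_iff_nonempty.mp (by omega))
            · intro j _
              rw [hP] at hz; exact hz j
        _ = n * r := by simp [mul_comm]
        _ < 1 := by
            rw [lt_div_iff₀ (by positivity : (0:ℝ) < n)] at hr'
            linarith [hr']
    have hne : (m : ℂ) - f m z ≠ 0 := by
      rw [hf m z]
      intro h
      have h2 : (m : ℂ) * (1 - ∑ j, z j) = 0 := by ring_nf; ring_nf at h; linear_combination h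
      rcases mul_eq_zero.mp h2 with h3 | h3
      · have : m ≠ 0 := by omega
        exact this (by exact_mod_cast h3)
      · have : (∑ j, z j) = 1 := by linear_combination -h3
        rw [this] at hsum; simp at hsum
    apply Finset.prod_ne_zero_iff.mpr
    intro i _
    rw [hpd]
    exact mul_ne_zero (mul_ne_zero (sub_ne_zero.mpr hm1) (sub_ne_zero.mpr hm2)) hne
  · rintro ⟨φ, hφ, hφ3, g, hg⟩
    -- pick z₀ = single 0 (r/2)
    set z₀ : EuclideanSpace ℂ (Fin n) := EuclideanSpace.single ⟨0, by omega⟩ ((r:ℂ)/2) with hz₀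
    have hz₀P : z₀ ∈ P := by
      rw [hP]
      intro j
      simp only [hz₀, EuclideanSpace.single_apply]
      by_cases h : j = ⟨0, by omega⟩
      · simp [h]
        rw [abs_of_pos hr]
        linarith
      · simp [h, hr]
    have hsumz₀ : (∑ j, z₀ j) = (r:ℂ)/2 := by
      simp [hz₀, EuclideanSpace.single_apply, Finset.sum_ite_eq']
    have htend : Tendsto (fun j => f (φ j) z₀) atTop (𝓝 (g z₀)) := hg.tendsto_at hz₀P
    have hbdd : Tendsto (fun j => ‖f (φ j) z₀‖) atTop (𝓝 ‖g z₀‖) :=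
      (continuous_norm.tendsto _).comp htend
    have hun : Tendsto (fun j => ‖f (φ j) z₀‖) atTop atTop := by
      have : ∀ j, ‖f (φ j) z₀‖ = (φ j) * (r/2) := by
        intro j
        rw [hf, hsumz₀]
        rw [norm_mul]
        simp [Complex.norm_natCast]
        left
        exact hr.le
      simp only [this]
      apply Tendsto.atTop_mul_const (by linarith : (0:ℝ) < r/2)
      exact tendsto_natCast_atTop_atTop.comp hφ.tendsto_atTop
    exact not_tendsto_atTop_of_tendsto_nhds hbdd hun
end

section
/- Let n ≥ 1, let f : ℂⁿ → ℂ be entire, and let k be a positive integer. If f(z) ≠ 0 for all z ∈ ℂⁿ, and (D^k f(z), v) ≠ 1 for all z ∈ ℂⁿ and all v ∈ ℂⁿ with ‖v‖ = 1, then f is constant. -/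
open Filter Topology Metric

/-- The k-th order pure partial derivative ∂ᵏf/∂z_iᵏ of f : ℂⁿ → ℂ. -/
noncomputable def pdIter {n : ℕ} (k : ℕ) (f : EuclideanSpace ℂ (Fin n) → ℂ) (i : Fin n) :
    EuclideanSpace ℂ (Fin n) → ℂ :=
  (fun g z => fderiv ℂ g z (EuclideanSpace.single i 1))^[k] f

open Bornology

lemma pdIter_succ {n : ℕ} (m : ℕ) (f : EuclideanSpace ℂ (Fin n) → ℂ) (j : Fin n) :
    pdIter (m + 1) f j = fun z => fderiv ℂ (pdIter m f j) z (EuclideanSpace.single j 1) := by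
  unfold pdIter; rw [Function.iterate_succ_apply']

lemma pdIter_analytic {n : ℕ} (f : EuclideanSpace ℂ (Fin n) → ℂ)
    (hf : AnalyticOnNhd ℂ f Set.univ) (j : Fin n) (m : ℕ) :
    AnalyticOnNhd ℂ (pdIter m f j) Set.univ := by
  induction m with
  | zero => exact hf
  | succ m ih =>
    rw [pdIter_succ]
    intro z _
    exact ((ContinuousLinearMap.apply ℂ ℂ (EuclideanSpace.single j 1)).analyticAt _).comp
      (ih.fderiv z trivial)

lemma line_chain {n : ℕ} (f : EuclideanSpace ℂ (Fin n) → ℂ)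
    (hf : AnalyticOnNhd ℂ f Set.univ) (j : Fin n) (a : EuclideanSpace ℂ (Fin n)) (m : ℕ) (t : ℂ) :
    iteratedDeriv m (fun s => f (a + s • EuclideanSpace.single j 1)) t
      = pdIter m f j (a + t • EuclideanSpace.single j 1) := by
  set e := EuclideanSpace.single j (1 : ℂ) with he
  set L : ℂ → EuclideanSpace ℂ (Fin n) := fun s => a + s • e with hL
  have hLd : ∀ s, HasDerivAt L e s := by
    intro s
    have h1 : HasDerivAt (fun y : ℂ => y • e) ((1 : ℂ) • e) s := (hasDerivAt_id s).smul_const e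
    rw [one_smul] at h1
    exact h1.const_add a
  induction m generalizing t with
  | zero => simp [pdIter]
  | succ m ih =>
    have hDiff : Differentiable ℂ (pdIter m f j) :=
      fun z => ((pdIter_analytic f hf j m) z trivial).differentiableAt
    have heq : iteratedDeriv m (fun s => f (a + s • EuclideanSpace.single j 1))
        = fun s => pdIter m f j (L s) := funext fun s => ih s
    have hch : HasDerivAt (fun s => pdIter m f j (L s))
        (fderiv ℂ (pdIter m f j) (L t) e) t :=
      ((hDiff (L t)).hasFDerivAt).comp_hasDerivAt t (hLd t)
    rw [iteratedDeriv_succ, heq, hch.deriv, pdIter_succ]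

lemma aux_poly {g : ℂ → ℂ} (hg : Differentiable ℂ g) {m : ℕ}
    (hd : ∀ t, iteratedDeriv m g t = 0) (h0 : ∀ t, g t ≠ 0) :
    ∀ a b, g a = g b := by
  have hhigh : ∀ r t, iteratedDeriv (m + r) g t = 0 := by
    intro r
    induction r with
    | zero => exact hd
    | succ r ih =>
      intro t
      have he : iteratedDeriv (m + r) g = fun _ => (0 : ℂ) := funext ih
      rw [show m + (r + 1) = (m + r) + 1 by ring, iteratedDeriv_succ, he, deriv_const']
  set a : ℕ → ℂ := fun n => (Nat.factorial n : ℂ)⁻¹ * iteratedDeriv n g 0 with ha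
  have htay : ∀ z, g z = ∑ n ∈ Finset.range m, a n * z ^ n := by
    intro z
    have h1 := Complex.taylorSeries_eq_of_entire' 0 z hg
    have h2 : ∑' (n : ℕ), (Nat.factorial n : ℂ)⁻¹ * iteratedDeriv n g 0 * (z - 0) ^ n
        = ∑ n ∈ Finset.range m, a n * z ^ n := by
      rw [tsum_eq_sum (s := Finset.range m)]
      · simp [ha]
      · intro n hn
        have hmn : m ≤ n := by simpa using hn
        obtain ⟨r, hr⟩ := Nat.exists_eq_add_of_le hmn
        rw [hr, hhigh r 0]; ring
    rw [← h1, h2]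
  set p : Polynomial ℂ :=
    ∑ n ∈ Finset.range m, Polynomial.C (a n) * Polynomial.X ^ n with hp
  have hev : ∀ z, p.eval z = g z := by
    intro z
    rw [htay z, hp]
    simp [Polynomial.eval_finset_sum]
  have hdeg : p.degree ≤ 0 := by
    by_contra hlt
    obtain ⟨z, hz⟩ := Complex.exists_root (lt_of_not_ge (fun h => hlt h))
    exact h0 z (by rw [← hev z]; exact hz)
  intro s t
  rw [← hev s, ← hev t, Polynomial.eq_C_of_degree_le_zero hdeg]
  simp

lemma aux_line {n : ℕ} (k : ℕ) (hk : 1 ≤ k)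
    (f : EuclideanSpace ℂ (Fin n) → ℂ) (hf : AnalyticOnNhd ℂ f Set.univ)
    (h0 : ∀ z, f z ≠ 0)
    (h1 : ∀ z, ∀ v : EuclideanSpace ℂ (Fin n), ‖v‖ = 1 →
      (∑ j, pdIter k f j z * v j) ≠ 1)
    (j : Fin n) (a : EuclideanSpace ℂ (Fin n)) (t : ℂ) :
    f (a + t • EuclideanSpace.single j 1) = f a := by
  set e := EuclideanSpace.single j (1 : ℂ) with he
  set P := pdIter k f j with hP
  -- ‖P z‖ ≠ 1 everywhere
  have hne : ∀ z, ‖P z‖ ≠ 1 := by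
    intro z hz
    have hp0 : P z ≠ 0 := by intro h; rw [h] at hz; simp at hz
    have hv : ‖(EuclideanSpace.single j (P z)⁻¹ : EuclideanSpace ℂ (Fin n))‖ = 1 := by
      rw [EuclideanSpace.norm_single, norm_inv, hz]; norm_num
    apply h1 z _ hv
    rw [Finset.sum_eq_single j]
    · simp [EuclideanSpace.single_apply, ← hP, mul_inv_cancel₀ hp0]
    · intro i _ hij
      simp [EuclideanSpace.single_apply, hij]
    · intro h; exact absurd (Finset.mem_univ j) h
  have hPc : Continuous P := by
    rw [continuous_iff_continuousAt]
    exact fun z => ((pdIter_analytic f hf j k) z trivial).continuousAt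
  -- dichotomy
  have hdich : (∀ z, ‖P z‖ < 1) ∨ (∀ z, 1 < ‖P z‖) := by
    have hU : IsOpen {z : EuclideanSpace ℂ (Fin n) | ‖P z‖ < 1} :=
      isOpen_lt (hPc.norm) continuous_const
    have hV : IsOpen {z : EuclideanSpace ℂ (Fin n) | 1 < ‖P z‖} :=
      isOpen_lt continuous_const (hPc.norm)
    have hdisj : Disjoint {z : EuclideanSpace ℂ (Fin n) | ‖P z‖ < 1}
        {z : EuclideanSpace ℂ (Fin n) | 1 < ‖P z‖} := by
      apply Set.disjoint_left.mpr
      intro z hz hz'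
      simp only [Set.mem_setOf_eq] at hz hz'
      linarith
    have hcov : (Set.univ : Set (EuclideanSpace ℂ (Fin n))) ⊆
        {z | ‖P z‖ < 1} ∪ {z | 1 < ‖P z‖} := by
      intro z _
      rcases lt_trichotomy ‖P z‖ 1 with h | h | h
      · exact Or.inl h
      · exact absurd h (hne z)
      · exact Or.inr h
    rcases isPreconnected_univ.subset_or_subset hU hV hdisj hcov with h | h
    · exact Or.inl fun z => h (Set.mem_univ z)
    · exact Or.inr fun z => h (Set.mem_univ z)
  -- P is constant along the line
  have hDiffP : Differentiable ℂ P :=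
    fun z => ((pdIter_analytic f hf j k) z trivial).differentiableAt
  have hLdiff : Differentiable ℂ (fun s : ℂ => a + s • e) := by
    apply Differentiable.const_add
    exact (differentiable_id).smul_const e
  have hPLdiff : Differentiable ℂ (fun s : ℂ => P (a + s • e)) :=
    hDiffP.comp hLdiff
  have hconst : ∀ s u : ℂ, P (a + s • e) = P (a + u • e) := by
    rcases hdich with hlt | hgt
    · intro s u
      apply hPLdiff.apply_eq_apply_of_bounded
      apply (isBounded_closedBall (x := (0:ℂ)) (r := 1)).subset
      rintro w ⟨s', rfl⟩
      simp only [mem_closedBall, dist_zero_right]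
      exact le_of_lt (hlt _)
    · intro s u
      have hne0 : ∀ s' : ℂ, P (a + s' • e) ≠ 0 := by
        intro s' h
        have := hgt (a + s' • e)
        rw [h] at this; simp at this; linarith
      have hq : Differentiable ℂ (fun s' : ℂ => (P (a + s' • e))⁻¹) :=
        hPLdiff.inv (fun s' => hne0 s')
      have : (P (a + s • e))⁻¹ = (P (a + u • e))⁻¹ := by
        apply hq.apply_eq_apply_of_bounded
        apply (isBounded_closedBall (x := (0:ℂ)) (r := 1)).subset
        rintro w ⟨s', rfl⟩
        simp only [mem_closedBall, dist_zero_right, norm_inv]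
        rw [inv_le_one_iff₀]
        right
        exact le_of_lt (hgt _)
      exact inv_injective this
  -- g := f along the line is a "polynomial" with no zeros
  set g : ℂ → ℂ := fun s => f (a + s • e) with hg
  have hfd : Differentiable ℂ f := fun z => (hf z trivial).differentiableAt
  have hgdiff : Differentiable ℂ g := hfd.comp hLdiff
  have hgd : ∀ s, iteratedDeriv (k + 1) g s = 0 := by
    intro s
    have hk' : iteratedDeriv k g = fun _ => P (a + (0:ℂ) • e) := by
      funext u
      rw [hg, he, line_chain f hf j a k u, ← hP, ← he, hconst u 0]
    rw [iteratedDeriv_succ, hk', deriv_const']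
  have := aux_poly hgdiff hgd (fun s => h0 _) t 0
  rw [hg] at this
  simpa using this

/-- Picard-type theorem: if f is entire on ℂⁿ, never 0, and (Dᵏf(z), v) ≠ 1 for all z
and all unit vectors v, then f is constant. -/
theorem stmt_5 {n : ℕ} (hn : 1 ≤ n) (k : ℕ) (hk : 1 ≤ k)
    (f : EuclideanSpace ℂ (Fin n) → ℂ) (hf : AnalyticOnNhd ℂ f Set.univ)
    (h0 : ∀ z, f z ≠ 0)
    (h1 : ∀ z, ∀ v : EuclideanSpace ℂ (Fin n), ‖v‖ = 1 →
      (∑ j, pdIter k f j z * v j) ≠ 1) :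
    ∀ z w, f z = f w := by
  have key : ∀ (s : Finset (Fin n)) (z w : EuclideanSpace ℂ (Fin n)),
      (∀ i, i ∉ s → z i = w i) → f z = f w := by
    intro s
    induction s using Finset.induction_on with
    | empty =>
      intro z w h
      have : z = w := PiLp.ext fun i => h i (Finset.notMem_empty i)
      rw [this]
    | @insert j s hj ih =>
      intro z w h
      set z' : EuclideanSpace ℂ (Fin n) :=
        z + (w j - z j) • EuclideanSpace.single j 1 with hz'
      have ha : f z = f z' := (aux_line k hk f hf h0 h1 j z (w j - z j)).symm
      have hb : f z' = f w := by
        apply ih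
        intro i hi
        by_cases hij : i = j
        · subst hij
          simp only [hz', PiLp.add_apply, PiLp.smul_apply, EuclideanSpace.single_apply,
            if_pos rfl, smul_eq_mul, mul_one, if_true, eq_self_iff_true]
          ring
        · have hzw : z i = w i := h i (by simp [hij, hi])
          simp only [hz', PiLp.add_apply, PiLp.smul_apply, EuclideanSpace.single_apply,
            smul_eq_mul, hzw]
          rw [if_neg hij]
          ring
      rw [ha, hb]
  intro z w
  exact key Finset.univ z w (fun i hi => absurd (Finset.mem_univ i) hi)
end

section
/- (Several-variables Grahl–Nevo theorem.) Let D ⊆ ℂⁿ be a domain and let ε > 0. Then the family 𝓕 = { f ∈ 𝓗(D) : f^#(z) > ε for all z ∈ D } is normal in D, where f^#(z) = sup_{‖v‖=1} |(Df(z), v)| / (1 + |f(z)|²). -/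
open Filter Topology Metric

/-- The spherical derivative f^#(z) = sup_{‖v‖=1} |(Df(z), v)| / (1 + |f(z)|²). -/
noncomputable def sphDeriv {n : ℕ} (f : EuclideanSpace ℂ (Fin n) → ℂ)
    (z : EuclideanSpace ℂ (Fin n)) : ℝ :=
  (⨆ v : Metric.sphere (0 : EuclideanSpace ℂ (Fin n)) 1,
      ‖∑ j, pd f j z * (v : EuclideanSpace ℂ (Fin n)) j‖) /
    (1 + ‖f z‖ ^ 2)

/-- A family 𝓕 is normal on D if every sequence in 𝓕 has a subsequence converging
locally uniformly on D. -/
def IsNormalFamilyOn {n : ℕ} (D : Set (EuclideanSpace ℂ (Fin n)))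
    (𝓕 : Set (EuclideanSpace ℂ (Fin n) → ℂ)) : Prop :=
  ∀ F : ℕ → EuclideanSpace ℂ (Fin n) → ℂ, (∀ j, F j ∈ 𝓕) →
    ∃ φ : ℕ → ℕ, StrictMono φ ∧ ∃ g : EuclideanSpace ℂ (Fin n) → ℂ,
      TendstoLocallyUniformlyOn (fun j => F (φ j)) g atTop D

namespace GrahlNevo

/-- The differential applied to a vector equals the sum of partials times coordinates. -/
lemma sum_pd_eq {n : ℕ} (f : EuclideanSpace ℂ (Fin n) → ℂ) (z : EuclideanSpace ℂ (Fin n))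
    (v : EuclideanSpace ℂ (Fin n)) :
    ∑ j, pd f j z * v j = fderiv ℂ f z v := by
  have hv : v = ∑ j, v j • EuclideanSpace.single j (1 : ℂ) := by
    ext i
    have : (∑ j, v j • EuclideanSpace.single j (1 : ℂ)) i
        = ∑ j, (v j • EuclideanSpace.single j (1 : ℂ)) i := by
      rw [WithLp.ofLp_sum, Finset.sum_apply]
    rw [this]
    simp [EuclideanSpace.single_apply]
  conv_rhs => rw [hv]
  rw [map_sum]
  simp only [map_smul, smul_eq_mul, pd]
  exact Finset.sum_congr rfl fun j _ => mul_comm _ _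

/-- Directional Cauchy/Schwarz estimate on a ball. -/
lemma deriv_bound {n : ℕ} {f : EuclideanSpace ℂ (Fin n) → ℂ} {z : EuclideanSpace ℂ (Fin n)}
    {r C : ℝ} (hr : 0 < r) (hC : 0 < C)
    (hd : DifferentiableOn ℂ f (ball z r))
    (hb : ∀ w ∈ ball z r, ‖f w‖ ≤ C)
    {v : EuclideanSpace ℂ (Fin n)} (hv : ‖v‖ = 1) :
    ‖fderiv ℂ f z v‖ ≤ 3 * C / r := by
  set h : ℂ → EuclideanSpace ℂ (Fin n) := fun t => z + t • v with hh
  have hmapsh : ∀ t ∈ ball (0 : ℂ) r, h t ∈ ball z r := by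
    intro t ht
    simp only [mem_ball, dist_zero_right] at ht
    simp only [hh, mem_ball, dist_eq_norm, add_sub_cancel_left, norm_smul, hv, mul_one]
    exact ht
  have hdh : Differentiable ℂ h := (differentiable_id.smul_const v).const_add z
  have hdg : DifferentiableOn ℂ (f ∘ h) (ball (0 : ℂ) r) :=
    hd.comp hdh.differentiableOn hmapsh
  have hmaps : Set.MapsTo (f ∘ h) (ball (0 : ℂ) r) (ball ((f ∘ h) 0) (3 * C)) := by
    intro t ht
    have h1 : ‖f (h t)‖ ≤ C := hb _ (hmapsh t ht)
    have h2 : ‖f (h 0)‖ ≤ C := hb _ (hmapsh 0 (by simpa using hr))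
    have : dist (f (h t)) (f (h 0)) ≤ ‖f (h t)‖ + ‖f (h 0)‖ := dist_le_norm_add_norm _ _
    simp only [Function.comp, mem_ball]
    nlinarith
  have hfd : DifferentiableAt ℂ f z :=
    (hd.differentiableAt (isOpen_ball.mem_nhds (mem_ball_self hr)))
  have hder : HasDerivAt (f ∘ h) (fderiv ℂ f z v) 0 := by
    have h1 : HasDerivAt h v 0 := by
      have h2 : HasDerivAt (fun t : ℂ => t • v) ((1 : ℂ) • v) 0 :=
        (hasDerivAt_id (0 : ℂ)).smul_const v
      simpa [hh, one_smul] using h2.const_add z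
    have h0 : HasFDerivAt f (fderiv ℂ f z) (h 0) := by
      simpa [hh] using hfd.hasFDerivAt
    exact h0.comp_hasDerivAt 0 h1
  calc ‖fderiv ℂ f z v‖ = ‖deriv (f ∘ h) 0‖ := by rw [hder.deriv]
    _ ≤ 3 * C / r := Complex.norm_deriv_le_div_of_mapsTo_ball hdg (hmaps.mono_right ball_subset_closedBall) hr

/-- Operator norm bound for the differential. -/
lemma opnorm_bound {n : ℕ} {f : EuclideanSpace ℂ (Fin n) → ℂ} {z : EuclideanSpace ℂ (Fin n)}
    {r C : ℝ} (hr : 0 < r) (hC : 0 < C)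
    (hd : DifferentiableOn ℂ f (ball z r))
    (hb : ∀ w ∈ ball z r, ‖f w‖ ≤ C) :
    ‖fderiv ℂ f z‖ ≤ 3 * C / r := by
  refine ContinuousLinearMap.opNorm_le_bound _ (by positivity) fun v => ?_
  rcases eq_or_ne v 0 with rfl | hv
  · simp
  have hnv : (‖v‖ : ℝ) ≠ 0 := norm_ne_zero_iff.mpr hv
  have hw : ‖(‖v‖⁻¹ • v : EuclideanSpace ℂ (Fin n))‖ = 1 := by
    rw [norm_smul, norm_inv, norm_norm, inv_mul_cancel₀ hnv]
  have hub := deriv_bound hr hC hd hb hw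
  calc ‖fderiv ℂ f z v‖ = ‖fderiv ℂ f z (‖v‖ • (‖v‖⁻¹ • v))‖ := by
        rw [smul_inv_smul₀ hnv]
    _ = ‖v‖ * ‖fderiv ℂ f z (‖v‖⁻¹ • v)‖ := by
        rw [(fderiv ℂ f z).map_smul_of_tower, norm_smul, norm_norm]
    _ ≤ ‖v‖ * (3 * C / r) := by
        exact mul_le_mul_of_nonneg_left hub (norm_nonneg v)
    _ = 3 * C / r * ‖v‖ := mul_comm _ _

lemma sphere_nonempty {n : ℕ} (hn : 1 ≤ n) :
    Nonempty (Metric.sphere (0 : EuclideanSpace ℂ (Fin n)) 1) := by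
  refine ⟨⟨EuclideanSpace.single (⟨0, hn⟩ : Fin n) (1 : ℂ), ?_⟩⟩
  simp [EuclideanSpace.norm_single]

/-- The fundamental bound: if the spherical derivative exceeds `ε` on `D` and
`closedBall z₀ δ ⊆ D`, then `‖f z₀‖ ≤ 12 / (ε * δ)`. -/
lemma norm_le {n : ℕ} (hn : 1 ≤ n) {D : Set (EuclideanSpace ℂ (Fin n))}
    {f : EuclideanSpace ℂ (Fin n) → ℂ}
    (hf : AnalyticOnNhd ℂ f D) {ε : ℝ} (hε : 0 < ε)
    (hsph : ∀ z ∈ D, sphDeriv f z > ε)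
    {z₀ : EuclideanSpace ℂ (Fin n)} {δ : ℝ} (hδ : 0 < δ)
    (hsub : closedBall z₀ δ ⊆ D) :
    ‖f z₀‖ ≤ 12 / (ε * δ) := by
  haveI := sphere_nonempty hn
  have hcont : ContinuousOn f (closedBall z₀ δ) := hf.continuousOn.mono hsub
  have hΦc : ContinuousOn (fun w => ‖f w‖ * (δ - dist w z₀)) (closedBall z₀ δ) :=
    hcont.norm.mul ((continuous_const.sub ((continuous_id.dist continuous_const))).continuousOn)
  obtain ⟨z₁, hz₁K, hz₁max⟩ := (isCompact_closedBall z₀ δ).exists_isMaxOn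
    ⟨z₀, mem_closedBall_self hδ.le⟩ hΦc
  have hmax : ∀ w ∈ closedBall z₀ δ, ‖f w‖ * (δ - dist w z₀) ≤ ‖f z₁‖ * (δ - dist z₁ z₀) :=
    fun w hw => hz₁max hw
  obtain ⟨M, hMdef⟩ : ∃ M, M = ‖f z₁‖ * (δ - dist z₁ z₀) := ⟨_, rfl⟩
  have hz₀Φ : ‖f z₀‖ * δ ≤ M := by
    have := hmax z₀ (mem_closedBall_self hδ.le)
    rw [hMdef]
    simpa using this
  have hMle : M ≤ 12 / ε := by
    rcases le_or_gt M 0 with hM0 | hM0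
    · have : 0 < 12 / ε := by positivity
      linarith
    -- M > 0 case
    have hd1 : dist z₁ z₀ ≤ δ := mem_closedBall.mp hz₁K
    have hdpos : 0 < δ - dist z₁ z₀ := by
      by_contra h
      push_neg at h
      have : M ≤ 0 := hMdef ▸ mul_nonpos_of_nonneg_of_nonpos (norm_nonneg _) h
      linarith
    have hfz₁ : 0 < ‖f z₁‖ := by
      by_contra h
      push_neg at h
      have h0 : ‖f z₁‖ = 0 := le_antisymm h (norm_nonneg _)
      rw [hMdef, h0, zero_mul] at hM0
      exact lt_irrefl _ hM0
    obtain ⟨r, hrdef⟩ : ∃ r, r = (δ - dist z₁ z₀) / 2 := ⟨_, rfl⟩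
    have hrpos : 0 < r := by rw [hrdef]; positivity
    have hr2 : 2 * r = δ - dist z₁ z₀ := by rw [hrdef]; ring
    have hballK : ∀ w ∈ ball z₁ r, w ∈ closedBall z₀ δ ∧ r ≤ δ - dist w z₀ := by
      intro w hw
      have h1 : dist w z₁ < r := mem_ball.mp hw
      have h2 : dist w z₀ ≤ dist w z₁ + dist z₁ z₀ := dist_triangle _ _ _
      constructor
      · rw [mem_closedBall]; linarith
      · linarith
    have hbound : ∀ w ∈ ball z₁ r, ‖f w‖ ≤ M / r := by
      intro w hw
      obtain ⟨hwK, hwr⟩ := hballK w hw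
      have h3 := hmax w hwK
      have h4 : ‖f w‖ * r ≤ M := by
        calc ‖f w‖ * r ≤ ‖f w‖ * (δ - dist w z₀) :=
              mul_le_mul_of_nonneg_left hwr (norm_nonneg _)
          _ ≤ M := by rw [hMdef]; exact h3
      rw [le_div_iff₀ hrpos]; exact h4
    have hCpos : 0 < M / r := by positivity
    have hdiff : DifferentiableOn ℂ f (ball z₁ r) := by
      intro w hw
      exact ((hf w (hsub (hballK w hw).1)).differentiableAt).differentiableWithinAt
    have hsup : (⨆ v : Metric.sphere (0 : EuclideanSpace ℂ (Fin n)) 1,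
        ‖∑ j, pd f j z₁ * (v : EuclideanSpace ℂ (Fin n)) j‖) ≤ 3 * (M / r) / r := by
      refine ciSup_le fun v => ?_
      rw [sum_pd_eq]
      have hv1 : ‖(v : EuclideanSpace ℂ (Fin n))‖ = 1 := by
        have := v.2
        simpa [mem_sphere, dist_zero_right] using this
      exact deriv_bound hrpos hCpos hdiff hbound hv1
    have hz₁D : z₁ ∈ D := hsub hz₁K
    have hsph₁ := hsph z₁ hz₁D
    rw [sphDeriv, gt_iff_lt, lt_div_iff₀ (by positivity)] at hsph₁
    have hfz₁eq : ‖f z₁‖ = M / (2 * r) := by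
      rw [hMdef, ← hr2]
      field_simp
    have hchain : ε * (1 + (M / (2 * r)) ^ 2) ≤ 3 * (M / r) / r := by
      calc ε * (1 + (M / (2 * r)) ^ 2) = ε * (1 + ‖f z₁‖ ^ 2) := by
            rw [hfz₁eq]
        _ ≤ _ := le_trans hsph₁.le hsup
    have h1 : ε * (M / (2 * r)) ^ 2 ≤ 3 * (M / r) / r := by nlinarith
    have h4 : ε * M ^ 2 / 4 ≤ 3 * M := by
      have h3 := mul_le_mul_of_nonneg_right h1 (sq_nonneg r)
      have e1 : ε * (M / (2 * r)) ^ 2 * r ^ 2 = ε * M ^ 2 / 4 := by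
        field_simp
        ring
      have e2 : 3 * (M / r) / r * r ^ 2 = 3 * M := by
        field_simp
      rw [e1, e2] at h3
      exact h3
    rw [le_div_iff₀ hε]
    nlinarith
  have h5 : ‖f z₀‖ ≤ M / δ := by rw [le_div_iff₀ hδ]; exact hz₀Φ
  have h6 : M / δ ≤ (12 / ε) / δ := by gcongr
  calc ‖f z₀‖ ≤ (12 / ε) / δ := le_trans h5 h6
    _ = 12 / (ε * δ) := by rw [div_div]

/-- Local Lipschitz bound, uniform over the family. -/
lemma lip {n : ℕ} (hn : 1 ≤ n) {D : Set (EuclideanSpace ℂ (Fin n))}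
    {f : EuclideanSpace ℂ (Fin n) → ℂ}
    (hf : AnalyticOnNhd ℂ f D) {ε : ℝ} (hε : 0 < ε)
    (hsph : ∀ z ∈ D, sphDeriv f z > ε)
    {x : EuclideanSpace ℂ (Fin n)} {δ : ℝ} (hδ : 0 < δ)
    (hsub : closedBall x (4 * δ) ⊆ D) :
    ∀ a ∈ closedBall x (2 * δ), ∀ b ∈ closedBall x (2 * δ),
      ‖f a - f b‖ ≤ (3 * (12 / (ε * δ)) / δ) * ‖a - b‖ := by
  have h2δ : closedBall x (2 * δ) ⊆ D := fun w hw => hsub (by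
    rw [mem_closedBall] at hw ⊢; linarith)
  have hder : ∀ z ∈ closedBall x (2 * δ), ‖fderiv ℂ f z‖ ≤ 3 * (12 / (ε * δ)) / δ := by
    intro z hz
    rw [mem_closedBall] at hz
    have hbd : ∀ w ∈ ball z δ, ‖f w‖ ≤ 12 / (ε * δ) := by
      intro w hw
      rw [mem_ball] at hw
      refine norm_le hn hf hε hsph hδ (fun y hy => hsub ?_)
      rw [mem_closedBall] at hy ⊢
      have h1 : dist y x ≤ dist y w + dist w z + dist z x := dist_triangle4 _ _ _ _
      linarith
    have hdiff : DifferentiableOn ℂ f (ball z δ) := by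
      intro w hw
      rw [mem_ball] at hw
      refine ((hf w (hsub ?_)).differentiableAt).differentiableWithinAt
      rw [mem_closedBall]
      have h1 := dist_triangle w z x
      linarith
    exact opnorm_bound hδ (by positivity) hdiff hbd
  intro a ha b hb
  exact Convex.norm_image_sub_le_of_norm_fderiv_le
    (fun z hz => (hf z (h2δ hz)).differentiableAt) hder (convex_closedBall x (2 * δ)) hb ha

end GrahlNevo

/-- Several-variables Grahl–Nevo theorem: for ε > 0, the family of holomorphic f on a
domain D with f^#(z) > ε for all z ∈ D is normal in D. -/
theorem stmt_11 {n : ℕ} (hn : 1 ≤ n) (D : Set (EuclideanSpace ℂ (Fin n)))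
    (hD : IsOpen D) (hDconn : IsConnected D) (ε : ℝ) (hε : 0 < ε) :
    IsNormalFamilyOn D
      {f | AnalyticOnNhd ℂ f D ∧ ∀ z ∈ D, sphDeriv f z > ε} := by
  classical
  intro F hF
  -- a dense sequence in the ambient space
  have hne : Nonempty (EuclideanSpace ℂ (Fin n)) := ⟨0⟩
  set u : ℕ → EuclideanSpace ℂ (Fin n) := TopologicalSpace.denseSeq _ with hu_def
  have hu : DenseRange u := TopologicalSpace.denseRange_denseSeq _
  -- radii around dense points inside D
  have hex : ∀ i : ℕ, ∃ d : ℝ, 0 < d ∧ (u i ∈ D → closedBall (u i) d ⊆ D) := by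
    intro i
    by_cases h : u i ∈ D
    · obtain ⟨d, hd, hdsub⟩ := Metric.isOpen_iff.mp hD _ h
      exact ⟨d / 2, by positivity, fun _ =>
        (closedBall_subset_ball (by linarith)).trans hdsub⟩
    · exact ⟨1, one_pos, fun h' => absurd h' h⟩
  choose dd hddpos hddsub using hex
  -- the diagonal sequence in a compact product
  set B : ℕ → ℝ := fun i => max (12 / (ε * dd i)) 0 with hB
  set G : ℕ → (ℕ → ℂ) := fun j i => if u i ∈ D then F j (u i) else 0 with hG
  have hGmem : ∀ j, G j ∈ Set.pi Set.univ (fun i => closedBall (0 : ℂ) (B i)) := by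
    intro j i _
    simp only [hG, mem_closedBall, dist_zero_right]
    split_ifs with h
    · exact le_trans (GrahlNevo.norm_le hn (hF j).1 hε (hF j).2 (hddpos i) (hddsub i h))
        (le_max_left _ _)
    · simp only [norm_zero]
      exact le_max_right _ _
  have hcom : IsCompact (Set.pi Set.univ fun i => closedBall (0 : ℂ) (B i)) :=
    isCompact_univ_pi fun i => isCompact_closedBall _ _
  obtain ⟨h0, -, φ, hφ, hconv⟩ := hcom.isSeqCompact hGmem
  -- pointwise convergence at dense points lying in D
  have hpt : ∀ i, u i ∈ D → Tendsto (fun j => F (φ j) (u i)) atTop (𝓝 (h0 i)) := by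
    intro i hi
    have := tendsto_pi_nhds.mp hconv i
    simpa [hG, Function.comp, hi] using this
  -- local uniform Cauchyness
  have key : ∀ x ∈ D, ∃ δ > 0, closedBall x δ ⊆ D ∧
      UniformCauchySeqOn (fun j => F (φ j)) atTop (closedBall x δ) := by
    intro x hx
    obtain ⟨δ₀, hδ₀, hδ₀sub⟩ := Metric.isOpen_iff.mp hD x hx
    obtain ⟨δ, hδdef⟩ : ∃ δ : ℝ, δ = δ₀ / 8 := ⟨_, rfl⟩
    have hδ : 0 < δ := by rw [hδdef]; positivity
    have hsub4 : closedBall x (4 * δ) ⊆ D := by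
      refine (closedBall_subset_ball ?_).trans hδ₀sub
      rw [hδdef]; linarith
    have hsub2 : closedBall x (2 * δ) ⊆ D := fun w hw => hsub4 (by
      rw [mem_closedBall] at hw ⊢; linarith)
    have hsub1 : closedBall x δ ⊆ D := fun w hw => hsub4 (by
      rw [mem_closedBall] at hw ⊢; linarith)
    refine ⟨δ, hδ, hsub1, ?_⟩
    obtain ⟨L, hLdef⟩ : ∃ L : ℝ, L = 3 * (12 / (ε * δ)) / δ := ⟨_, rfl⟩
    have hLpos : 0 < L := by rw [hLdef]; positivity
    have hlip : ∀ j, ∀ a ∈ closedBall x (2 * δ), ∀ b ∈ closedBall x (2 * δ),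
        ‖F (φ j) a - F (φ j) b‖ ≤ L * ‖a - b‖ := by
      intro j a ha b hb
      rw [hLdef]
      exact GrahlNevo.lip hn (hF (φ j)).1 hε (hF (φ j)).2 hδ hsub4 a ha b hb
    rw [Metric.uniformCauchySeqOn_iff]
    intro η hη
    obtain ⟨ρ, hρdef⟩ : ∃ ρ : ℝ, ρ = min (η / (4 * L + 4)) δ := ⟨_, rfl⟩
    have hρpos : 0 < ρ := by rw [hρdef]; exact lt_min (by positivity) hδ
    have hρδ : ρ ≤ δ := by rw [hρdef]; exact min_le_right _ _
    have hρη : L * ρ ≤ η / 4 := by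
      have h1 : ρ ≤ η / (4 * L + 4) := by rw [hρdef]; exact min_le_left _ _
      have h2 : L * ρ ≤ L * (η / (4 * L + 4)) := mul_le_mul_of_nonneg_left h1 hLpos.le
      have h3 : L * (η / (4 * L + 4)) ≤ η / 4 := by
        rw [← mul_div_assoc, div_le_div_iff₀ (by positivity) (by norm_num)]
        nlinarith
      linarith
    -- cover the ball by small balls centered at dense points in D
    set U : ℕ → Set (EuclideanSpace ℂ (Fin n)) :=
      fun i => if u i ∈ closedBall x (2 * δ) ∩ D then ball (u i) ρ else ∅ with hU
    have hUopen : ∀ i, IsOpen (U i) := by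
      intro i
      simp only [hU]
      split_ifs
      exacts [isOpen_ball, isOpen_empty]
    have hcover : closedBall x δ ⊆ ⋃ i, U i := by
      intro y hy
      rw [mem_closedBall] at hy
      obtain ⟨i, hi⟩ := hu.exists_dist_lt y hρpos
      have h1 : u i ∈ closedBall x (2 * δ) := by
        rw [mem_closedBall]
        have := dist_triangle (u i) y x
        rw [dist_comm (u i) y] at this
        linarith
      have h2 : u i ∈ D := hsub2 h1
      refine Set.mem_iUnion.mpr ⟨i, ?_⟩
      simp only [hU, if_pos (Set.mem_inter h1 h2)]
      exact mem_ball.mpr hi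
    obtain ⟨T, hT⟩ := (isCompact_closedBall x δ).elim_finite_subcover U hUopen hcover
    -- Cauchy estimates at the finitely many dense points
    have hc : ∀ i : ℕ, ∃ N : ℕ, u i ∈ D →
        ∀ m ≥ N, ∀ k ≥ N, dist (F (φ m) (u i)) (F (φ k) (u i)) < η / 2 := by
      intro i
      by_cases h : u i ∈ D
      · obtain ⟨N, hN⟩ := Metric.cauchySeq_iff.mp (hpt i h).cauchySeq (η / 2) (by positivity)
        exact ⟨N, fun _ m hm k hk => hN m hm k hk⟩
      · exact ⟨0, fun h' => absurd h' h⟩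
    choose Nf hNf using hc
    refine ⟨T.sup Nf, fun m hm k hk y hy => ?_⟩
    have hyU : y ∈ ⋃ i ∈ T, U i := hT hy
    obtain ⟨i, hiT, hiU⟩ := Set.mem_iUnion₂.mp hyU
    have hcond : u i ∈ closedBall x (2 * δ) ∩ D := by
      by_contra h
      simp only [hU, if_neg h] at hiU
      exact hiU
    have hyballi : dist y (u i) < ρ := by
      simp only [hU, if_pos hcond] at hiU
      exact mem_ball.mp hiU
    have hyc : y ∈ closedBall x (2 * δ) := by
      rw [mem_closedBall] at hy ⊢
      linarith
    have hNi : Nf i ≤ T.sup Nf := Finset.le_sup hiT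
    have hmid := hNf i hcond.2 m (le_trans hNi hm) k (le_trans hNi hk)
    have l1 : dist (F (φ m) y) (F (φ m) (u i)) ≤ L * ρ := by
      rw [dist_eq_norm]
      refine le_trans (hlip m y hyc (u i) hcond.1) ?_
      have hyn : ‖y - u i‖ ≤ ρ := by rw [← dist_eq_norm]; exact hyballi.le
      exact mul_le_mul_of_nonneg_left hyn hLpos.le
    have l2 : dist (F (φ k) (u i)) (F (φ k) y) ≤ L * ρ := by
      rw [dist_eq_norm]
      refine le_trans (hlip k (u i) hcond.1 y hyc) ?_
      have hyn : ‖u i - y‖ ≤ ρ := by rw [← dist_eq_norm, dist_comm]; exact hyballi.le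
      exact mul_le_mul_of_nonneg_left hyn hLpos.le
    calc dist (F (φ m) y) (F (φ k) y)
        ≤ dist (F (φ m) y) (F (φ m) (u i)) + dist (F (φ m) (u i)) (F (φ k) (u i))
          + dist (F (φ k) (u i)) (F (φ k) y) := dist_triangle4 _ _ _ _
      _ < η := by linarith
  -- the limit function
  have hcauchy : ∀ z ∈ D, CauchySeq (fun j => F (φ j) z) := by
    intro z hz
    obtain ⟨δ, hδ, _, hucs⟩ := key z hz
    exact hucs.cauchySeq (mem_closedBall_self hδ.le)
  refine ⟨φ, hφ, fun z => limUnder atTop (fun j => F (φ j) z), ?_⟩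
  have hgt : ∀ z ∈ D, Tendsto (fun j => F (φ j) z) atTop
      (𝓝 (limUnder atTop (fun j => F (φ j) z))) :=
    fun z hz => (hcauchy z hz).tendsto_limUnder
  intro v hv x hx
  obtain ⟨δ, hδ, hsub, hucs⟩ := key x hx
  have htuo : TendstoUniformlyOn (fun j => F (φ j))
      (fun z => limUnder atTop (fun j => F (φ j) z)) atTop (closedBall x δ) :=
    hucs.tendstoUniformlyOn_of_tendsto (fun z hz => hgt z (hsub hz))
  exact ⟨closedBall x δ, mem_nhdsWithin_of_mem_nhds (closedBall_mem_nhds x hδ), htuo v hv⟩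
end
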